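/- arXiv:1404.6732 — 8 statements merged into one kernel-verified Lean document; each statement's English description precedes it below -/
import Mathlib

section
/- Let f : I → (0,∞) be continuous on a subinterval I of (0,∞). If f is increasing and log-convex, then for all distinct x, y ∈ I, the logarithmic mean satisfies L(f(x), f(y)) ≥ f(L(x, y)). -/
noncomputable def logMean (a b : ℝ) : ℝ := (a - b) / (Real.log a - Real.log b)

open Real

lemma logMean_comm (a b : ℝ) : logMean a b = logMean b a := by
  unfold logMean
  rw [← neg_sub b a, ← neg_sub (Real.log b) (Real.log a), neg_div_neg_eq]

lemma logOn : ContinuousOn Real.log (Set.Ici (1:ℝ)) :=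
  Real.continuousOn_log.mono (by
    intro u hu
    simp only [Set.mem_compl_iff, Set.mem_singleton_iff]
    exact ne_of_gt (lt_of_lt_of_le one_pos hu))

-- For s > 1 : 2 log s ≤ s - 1/s
lemma aux_i {s : ℝ} (hs : 1 < s) : 2 * Real.log s ≤ s - 1/s := by
  have key : StrictMonoOn (fun u : ℝ => u - u⁻¹ - 2 * Real.log u) (Set.Ici 1) := by
    apply strictMonoOn_of_deriv_pos (convex_Ici 1)
    · apply ContinuousOn.sub
      · apply ContinuousOn.sub continuousOn_id
        exact continuousOn_id.inv₀ (fun u hu => by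
          have h1 : (1:ℝ) ≤ u := hu
          simp only [id]
          exact ne_of_gt (lt_of_lt_of_le one_pos h1))
      · exact continuousOn_const.mul logOn
    · intro u hu
      rw [interior_Ici] at hu
      have hu0 : (0:ℝ) < u := lt_trans one_pos hu
      have hd : HasDerivAt (fun v : ℝ => v - v⁻¹ - 2 * Real.log v)
          (1 - (-(1:ℝ) / u ^ 2) - 2 * u⁻¹) u := by
        exact ((hasDerivAt_id u).sub ((hasDerivAt_id u).inv hu0.ne')).sub
          ((Real.hasDerivAt_log hu0.ne').const_mul 2)
      rw [hd.deriv]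
      have heq : 1 - (-(1:ℝ) / u ^ 2) - 2 * u⁻¹ = (u - 1)^2 / u^2 := by
        field_simp; ring
      rw [heq]
      have h1 : 0 < (u - 1)^2 := pow_pos (sub_pos.mpr (Set.mem_Ioi.mp hu)) 2
      positivity
  have h := key (Set.self_mem_Ici) (Set.mem_Ici.mpr hs.le) hs
  simp only [Real.log_one, inv_one] at h
  norm_num at h
  rw [one_div]
  linarith

-- For t > 1 : 2(t-1)/(t+1) ≤ log t
lemma aux_ii {t : ℝ} (ht : 1 < t) : 2 * (t - 1) / (t + 1) ≤ Real.log t := by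
  have key : StrictMonoOn (fun u : ℝ => Real.log u + 4 * (u + 1)⁻¹) (Set.Ici 1) := by
    apply strictMonoOn_of_deriv_pos (convex_Ici 1)
    · apply ContinuousOn.add logOn
      apply continuousOn_const.mul
      exact (continuousOn_id.add continuousOn_const).inv₀
        (fun u hu => by
          have h1 : (1:ℝ) ≤ u := hu
          show u + 1 ≠ 0
          positivity)
    · intro u hu
      rw [interior_Ici] at hu
      have hu0 : (0:ℝ) < u := lt_trans one_pos hu
      have hu1 : u + 1 ≠ 0 := by positivity
      have hd : HasDerivAt (fun v : ℝ => Real.log v + 4 * (v + 1)⁻¹)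
          (u⁻¹ + 4 * (-(1:ℝ) / (u + 1) ^ 2)) u := by
        have := (Real.hasDerivAt_log hu0.ne').add
          ((((hasDerivAt_id u).add_const 1).inv hu1).const_mul 4)
        simpa [Pi.add_def] using this
      rw [hd.deriv]
      have heq : u⁻¹ + 4 * (-(1:ℝ) / (u + 1) ^ 2) = (u - 1)^2 / (u * (u + 1)^2) := by
        field_simp; ring
      rw [heq]
      have h1 : 0 < (u - 1)^2 := pow_pos (sub_pos.mpr (Set.mem_Ioi.mp hu)) 2
      positivity
  have h := key (Set.self_mem_Ici) (Set.mem_Ici.mpr ht.le) ht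
  simp only [Real.log_one] at h
  norm_num at h
  -- h : 2 < Real.log t + 4 * (t+1)⁻¹
  have ht1 : (0:ℝ) < t + 1 := by linarith
  have h2 : (4:ℝ) * (t + 1)⁻¹ = 4 / (t + 1) := by rw [div_eq_mul_inv]
  have h5 : 2 - 4 / (t + 1) ≤ Real.log t := by rw [← h2]; linarith
  rw [div_le_iff₀ ht1]
  have h6 : (2 - 4/(t+1)) * (t+1) = 2*(t-1) := by field_simp; ring
  nlinarith [mul_le_mul_of_nonneg_right h5 ht1.le]

lemma sqrt_le_logMean {a b : ℝ} (hb : 0 < b) (hab : b < a) :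
    Real.sqrt (a * b) ≤ logMean a b := by
  have ha : 0 < a := lt_trans hb hab
  set p := Real.sqrt a with hp
  set q := Real.sqrt b with hq
  have hp0 : 0 < p := Real.sqrt_pos.mpr ha
  have hq0 : 0 < q := Real.sqrt_pos.mpr hb
  have hpq : q < p := Real.sqrt_lt_sqrt hb.le hab
  have hs : 1 < p / q := (one_lt_div hq0).mpr hpq
  have h := aux_i hs
  have hlogp : Real.log p = Real.log a / 2 := Real.log_sqrt ha.le
  have hlogq : Real.log q = Real.log b / 2 := Real.log_sqrt hb.le
  have hlog : 2 * Real.log (p / q) = Real.log a - Real.log b := by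
    rw [Real.log_div hp0.ne' hq0.ne', hlogp, hlogq]; ring
  have hpq2 : p * q = Real.sqrt (a * b) := (Real.sqrt_mul ha.le b).symm
  have hpp : p * p = a := Real.mul_self_sqrt ha.le
  have hqq : q * q = b := Real.mul_self_sqrt hb.le
  have hrhs : p / q - 1 / (p / q) = (a - b) / Real.sqrt (a * b) := by
    rw [one_div_div, ← hpq2, ← hpp, ← hqq]
    rw [div_sub_div _ _ hq0.ne' hp0.ne']
    rw [mul_comm q p]
  rw [hlog, hrhs] at h
  -- h : log a - log b ≤ (a - b) / √(a b)
  have hlogpos : 0 < Real.log a - Real.log b := by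
    have := Real.log_lt_log hb hab
    linarith
  have hsab : 0 < Real.sqrt (a * b) := Real.sqrt_pos.mpr (by positivity)
  unfold logMean
  rw [le_div_iff₀ hlogpos]
  calc Real.sqrt (a*b) * (Real.log a - Real.log b)
      ≤ Real.sqrt (a*b) * ((a - b) / Real.sqrt (a*b)) := by
        apply mul_le_mul_of_nonneg_left h hsab.le
    _ = a - b := by field_simp

lemma logMean_le_am {a b : ℝ} (hb : 0 < b) (hab : b < a) :
    logMean a b ≤ (a + b) / 2 := by
  have ha : 0 < a := lt_trans hb hab
  have ht : 1 < a / b := (one_lt_div hb).mpr hab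
  have h := aux_ii ht
  have hlog : Real.log (a / b) = Real.log a - Real.log b := Real.log_div ha.ne' hb.ne'
  have hab2 : (0:ℝ) < a + b := by positivity
  have heq : 2 * (a/b - 1) / (a/b + 1) = 2 * (a - b) / (a + b) := by
    rw [div_eq_div_iff (by positivity) hab2.ne']
    field_simp
  rw [hlog, heq] at h
  have hlogpos : 0 < Real.log a - Real.log b := by
    have := Real.log_lt_log hb hab
    linarith
  unfold logMean
  rw [div_le_div_iff₀ hlogpos two_pos]
  have h6 : (a + b) * (2 * (a - b) / (a + b)) ≤ (a + b) * (Real.log a - Real.log b) :=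
    mul_le_mul_of_nonneg_left h hab2.le
  have h7 : (a + b) * (2 * (a - b) / (a + b)) = 2 * (a - b) := by field_simp
  linarith

theorem stmt0 (I : Set ℝ) (hI : I ⊆ Set.Ioi 0) (hIc : Convex ℝ I)
    (f : ℝ → ℝ) (hcont : ContinuousOn f I) (hpos : ∀ x ∈ I, 0 < f x)
    (hmono : StrictMonoOn f I) (hconv : ConvexOn ℝ I (fun x => Real.log (f x)))
    (x y : ℝ) (hx : x ∈ I) (hy : y ∈ I) (hxy : x ≠ y) :
    logMean (f x) (f y) ≥ f (logMean x y) := by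
  wlog hlt : x < y generalizing x y
  · push_neg at hlt
    have h := this y x hy hx hxy.symm (lt_of_le_of_ne hlt hxy.symm)
    rw [logMean_comm (f x) (f y), logMean_comm x y]
    exact h
  have hx0 : 0 < x := hI hx
  have hy0 : 0 < y := hI hy
  have hfx : 0 < f x := hpos x hx
  have hfy : 0 < f y := hpos y hy
  have hflt : f x < f y := hmono hx hy hlt
  have hLsym : logMean x y = logMean y x := logMean_comm x y
  have hgm : Real.sqrt (y * x) ≤ logMean y x := sqrt_le_logMean hx0 hlt
  have ham : logMean y x ≤ (y + x) / 2 := logMean_le_am hx0 hlt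
  have hxL : x ≤ logMean x y := by
    rw [hLsym]
    refine le_trans ?_ hgm
    calc x = Real.sqrt (x * x) := (Real.sqrt_mul_self hx0.le).symm
      _ ≤ Real.sqrt (y * x) := Real.sqrt_le_sqrt (by nlinarith)
  have hIcc : Set.Icc x y ⊆ I := hIc.ordConnected.out hx hy
  have hAMy : (x + y) / 2 ≤ y := by linarith
  have hAMx : x ≤ (x + y) / 2 := by linarith
  have hAM_mem : (x + y) / 2 ∈ I := hIcc ⟨hAMx, hAMy⟩
  have hLAM : logMean x y ≤ (x + y) / 2 := by
    rw [hLsym]; linarith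
  have hL_mem : logMean x y ∈ I := hIcc ⟨hxL, le_trans hLAM hAMy⟩
  have hfAM : 0 < f ((x + y) / 2) := hpos _ hAM_mem
  -- step 1: f(L) ≤ f(AM)
  have h1 : f (logMean x y) ≤ f ((x + y) / 2) :=
    hmono.monotoneOn hL_mem hAM_mem hLAM
  -- step 2: log f(AM) ≤ (log f x + log f y)/2
  have h2 : Real.log (f ((x + y) / 2)) ≤
      (Real.log (f x) + Real.log (f y)) / 2 := by
    have := hconv.2 hx hy (le_of_lt (show (0:ℝ) < 1/2 by norm_num))
      (le_of_lt (show (0:ℝ) < 1/2 by norm_num)) (by norm_num)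
    simp only [smul_eq_mul] at this
    have heq : (1:ℝ)/2 * x + 1/2 * y = (x + y) / 2 := by ring
    rw [heq] at this
    linarith
  -- step 3: f(AM) ≤ √(f y * f x)
  have h3 : f ((x + y) / 2) ≤ Real.sqrt (f y * f x) := by
    have hsq : (f ((x+y)/2))^2 ≤ f y * f x := by
      rw [← Real.log_le_log_iff (by positivity) (by positivity), Real.log_pow,
        Real.log_mul hfy.ne' hfx.ne']
      push_cast
      linarith
    exact (Real.le_sqrt hfAM.le (by positivity)).mpr hsq
  have h4 : Real.sqrt (f y * f x) ≤ logMean (f y) (f x) := sqrt_le_logMean hfx hflt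
  rw [ge_iff_le, logMean_comm (f x) (f y)]
  exact le_trans h1 (le_trans h3 h4)
end

section
/- Let f : I → (0,∞) be continuous on a subinterval I of (0,∞). If f is increasing and log-convex, then for all distinct x, y ∈ I, L(f(x), f(y)) ≥ f((x+y)/2), where L is the logarithmic mean. -/
open Real

lemma gm_le_logMean {a b : ℝ} (ha : 0 < a) (hb : 0 < b) (hab : b < a) :
    Real.sqrt (a * b) ≤ logMean a b := by
  set p := Real.log a
  set q := Real.log b
  have hpq : q < p := Real.log_lt_log hb hab
  have hea : a = Real.exp p := (Real.exp_log ha).symm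
  have heb : b = Real.exp q := (Real.exp_log hb).symm
  have hgm : Real.sqrt (a * b) = Real.exp ((p + q) / 2) := by
    rw [hea, heb, ← Real.exp_add, Real.sqrt_eq_iff_eq_sq] <;>
      [skip; positivity; positivity]
    rw [sq, ← Real.exp_add]
    congr 1; ring
  have hsinh : (p - q) / 2 < Real.sinh ((p - q) / 2) :=
    Real.self_lt_sinh_iff.2 (by linarith)
  have key : (p - q) * Real.exp ((p + q) / 2) ≤ a - b := by
    have h2 : 2 * ((p - q) / 2) ≤ 2 * Real.sinh ((p - q) / 2) := by linarith
    rw [Real.sinh_eq] at h2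
    have := mul_le_mul_of_nonneg_right h2 (Real.exp_pos ((p + q) / 2)).le
    calc (p - q) * Real.exp ((p + q) / 2)
        = 2 * ((p - q) / 2) * Real.exp ((p + q) / 2) := by ring
      _ ≤ 2 * ((Real.exp ((p-q)/2) - Real.exp (-((p-q)/2))) / 2) *
            Real.exp ((p + q) / 2) := this
      _ = Real.exp ((p-q)/2 + (p+q)/2) - Real.exp (-((p-q)/2) + (p+q)/2) := by
          rw [Real.exp_add, Real.exp_add]; ring
      _ = a - b := by rw [hea, heb]; ring_nf
  rw [logMean, hgm, le_div_iff₀ (by linarith)]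
  linarith [key]

lemma gm_le_logMean' {a b : ℝ} (ha : 0 < a) (hb : 0 < b) (hab : a ≠ b) :
    Real.sqrt (a * b) ≤ logMean a b := by
  rcases lt_or_gt_of_ne hab with h | h
  · have := gm_le_logMean hb ha h
    rwa [mul_comm, logMean, ← neg_sub a b, ← neg_sub (Real.log a),
      neg_div_neg_eq] at this
  · exact gm_le_logMean ha hb h

theorem stmt1 (I : Set ℝ) (hI : I ⊆ Set.Ioi 0) (hIc : Convex ℝ I)
    (f : ℝ → ℝ) (hcont : ContinuousOn f I) (hpos : ∀ x ∈ I, 0 < f x)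
    (hmono : StrictMonoOn f I) (hconv : ConvexOn ℝ I (fun x => Real.log (f x)))
    (x y : ℝ) (hx : x ∈ I) (hy : y ∈ I) (hxy : x ≠ y) :
    logMean (f x) (f y) ≥ f ((x + y) / 2) := by
  have hfx := hpos x hx
  have hfy := hpos y hy
  have hfne : f x ≠ f y := fun h => hxy (hmono.injOn hx hy h)
  have hmid : (x + y) / 2 ∈ I := by
    have := hIc hx hy (by norm_num : (0:ℝ) ≤ 1/2) (by norm_num : (0:ℝ) ≤ 1/2)
      (by norm_num)
    convert this using 1; simp [smul_eq_mul]; ring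
  have hconv2 := hconv.2 hx hy (by norm_num : (0:ℝ) ≤ 1/2)
    (by norm_num : (0:ℝ) ≤ 1/2) (by norm_num)
  simp only [smul_eq_mul] at hconv2
  have heq : (1:ℝ)/2 * x + 1/2 * y = (x + y) / 2 := by ring
  rw [heq] at hconv2
  have h1 : f ((x + y) / 2) ≤ Real.sqrt (f x * f y) := by
    have hmidpos := hpos _ hmid
    have : Real.log (f ((x+y)/2)) ≤ Real.log (Real.sqrt (f x * f y)) := by
      rw [Real.log_sqrt (by positivity), Real.log_mul hfx.ne' hfy.ne']
      linarith
    exact (Real.log_le_log_iff hmidpos (Real.sqrt_pos.2 (by positivity))).1 this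
  exact le_trans h1 (gm_le_logMean' hfx hfy hfne)
end

section
/- For distinct positive reals a and b, the logarithmic mean is strictly less than the arithmetic mean: (a - b)/(log a - log b) < (a + b)/2. -/
open Real

lemma key_ineq (t : ℝ) (ht : 1 < t) : 2 * (t - 1) < (t + 1) * Real.log t := by
  set g : ℝ → ℝ := fun x => (x + 1) * Real.log x - 2 * (x - 1) with hg
  have hmono : StrictMonoOn g (Set.Ici (1 : ℝ)) := by
    apply strictMonoOn_of_deriv_pos (convex_Ici 1)
    · apply ContinuousOn.sub
      · exact (continuousOn_id.add continuousOn_const).mul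
          (Real.continuousOn_log.mono (by intro x hx; simp at hx ⊢; linarith))
      · exact (continuousOn_const.mul (continuousOn_id.sub continuousOn_const))
    · intro x hx
      rw [interior_Ici] at hx
      have hx1 : 1 < x := hx
      have hx0 : (0:ℝ) < x := lt_trans one_pos hx
      have hxne : x ≠ 0 := ne_of_gt hx0
      have hd : HasDerivAt g (Real.log x + (x + 1) / x - 2) x := by
        have h1 : HasDerivAt (fun x : ℝ => (x + 1) * Real.log x)
            (1 * Real.log x + (x + 1) * (1 / x)) x := by
          exact by simpa using ((hasDerivAt_id x).add_const 1).fun_mul (Real.hasDerivAt_log hxne)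
        have h2 : HasDerivAt (fun x : ℝ => 2 * (x - 1)) 2 x := by
          simpa using ((hasDerivAt_id x).sub_const 1).const_mul 2
        have := h1.fun_sub h2
        exact this.congr_deriv (by ring)
      rw [hd.deriv]
      have hlog : 1 - x⁻¹ < Real.log x := by
        have h := Real.log_lt_sub_one_of_pos (x := x⁻¹) (by positivity)
          (ne_of_lt (by rw [inv_lt_one_iff₀]; right; linarith))
        rw [Real.log_inv] at h
        linarith
      have : (x + 1) / x = 1 + x⁻¹ := by field_simp
      rw [this]
      linarith
  have h1 : g 1 < g t := hmono (by simp) (by simp; linarith) ht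
  simp [hg] at h1
  linarith

theorem stmt5 (a b : ℝ) (ha : 0 < a) (hb : 0 < b) (hab : a ≠ b) :
    logMean a b < (a + b) / 2 := by
  wlog h : b < a with H
  · push_neg at h
    have hba : a < b := lt_of_le_of_ne h hab
    have := H b a hb ha hab.symm hba
    rwa [logMean_comm, add_comm] at this
  · -- b < a
    set t := a / b with ht
    have ht1 : 1 < t := (one_lt_div hb).mpr h
    have hlogt : Real.log a - Real.log b = Real.log t := (Real.log_div (ne_of_gt ha) (ne_of_gt hb)).symm
    have hlogpos : 0 < Real.log t := Real.log_pos ht1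
    have key := key_ineq t ht1
    unfold logMean
    rw [hlogt, div_lt_div_iff₀ hlogpos two_pos]
    have hab' : a = b * t := by rw [ht]; field_simp
    rw [hab']
    nlinarith [key, hb, hlogpos]
end

section
/- For distinct x, y ∈ (0, π/2), the logarithmic mean of cos x and cos y satisfies L(cos x, cos y) ≤ cos(L(x, y)). -/
open Real

lemma key_log {t : ℝ} (ht : 1 ≤ t) : 2 * (t - 1) / (t + 1) ≤ Real.log t := by
  set g : ℝ → ℝ := fun s => Real.log s - 2 * (s - 1) / (s + 1) with hg
  have hd : ∀ s : ℝ, 0 < s → HasDerivAt g (1 / s - 4 / (s + 1) ^ 2) s := by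
    intro s hs
    have h1 : HasDerivAt Real.log s⁻¹ s := Real.hasDerivAt_log (ne_of_gt hs)
    have h2 : HasDerivAt (fun u : ℝ => 2 * (u - 1)) 2 s := by
      simpa using (((hasDerivAt_id s).sub_const 1).const_mul (2:ℝ))
    have h3 : HasDerivAt (fun u : ℝ => u + 1) 1 s := by
      simpa using (hasDerivAt_id s).add_const 1
    have h4 : HasDerivAt (fun u : ℝ => 2 * (u - 1) / (u + 1))
        ((2 * (s + 1) - 2 * (s - 1) * 1) / (s + 1) ^ 2) s :=
      h2.div h3 (by positivity)
    have : HasDerivAt g (s⁻¹ - (2 * (s + 1) - 2 * (s - 1) * 1) / (s + 1) ^ 2) s := h1.sub h4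
    convert this using 1
    rw [one_div]
    ring
  have hmono : MonotoneOn g (Set.Ici (1:ℝ)) := by
    have hcont : ContinuousOn g (Set.Ici (1:ℝ)) := by
      apply ContinuousOn.sub
      · exact Real.continuousOn_log.mono (by
          intro s hs
          simp only [Set.mem_Ici, Set.mem_compl_iff, Set.mem_singleton_iff] at *
          linarith)
      · apply ContinuousOn.div
        · fun_prop
        · fun_prop
        · intro s hs
          simp only [Set.mem_Ici] at hs
          positivity
    apply monotoneOn_of_deriv_nonneg (convex_Ici 1) hcont
    · intro s hs
      rw [interior_Ici] at hs
      exact ((hd s (by linarith [Set.mem_Ioi.mp hs])).differentiableAt).differentiableWithinAt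
    · intro s hs
      rw [interior_Ici] at hs
      have hs1 : (1:ℝ) < s := Set.mem_Ioi.mp hs
      rw [(hd s (by linarith)).deriv]
      rw [sub_nonneg, div_le_div_iff₀ (by positivity) (by positivity)]
      nlinarith [sq_nonneg (s - 1)]
  have h1 : g 1 ≤ g t := hmono (by simp) (by simpa using ht) ht
  have hg1 : g 1 = 0 := by simp [hg]
  rw [hg1] at h1
  simp only [hg] at h1
  linarith

lemma logMean_pos {a b : ℝ} (hb : 0 < b) (hab : b < a) : 0 < logMean a b := by
  have ha : 0 < a := lt_trans hb hab
  have : Real.log b < Real.log a := Real.log_lt_log hb hab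
  exact div_pos (by linarith) (by linarith)

theorem stmt7 (x y : ℝ) (hx : x ∈ Set.Ioo 0 (π / 2)) (hy : y ∈ Set.Ioo 0 (π / 2))
    (hxy : x ≠ y) :
    logMean (Real.cos x) (Real.cos y) ≤ Real.cos (logMean x y) := by
  wlog h : y < x generalizing x y
  · have hyx : x < y := lt_of_le_of_ne (not_lt.mp h) hxy
    rw [logMean_comm (Real.cos x), logMean_comm x]
    exact this y x hy hx hxy.symm hyx
  obtain ⟨hx0, hx2⟩ := hx
  obtain ⟨hy0, hy2⟩ := hy
  have hpi : (0:ℝ) < π := Real.pi_pos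
  have hcx : 0 < Real.cos x := Real.cos_pos_of_mem_Ioo ⟨by linarith, hx2⟩
  have hcy : 0 < Real.cos y := Real.cos_pos_of_mem_Ioo ⟨by linarith, hy2⟩
  have hcc : Real.cos x < Real.cos y :=
    Real.cos_lt_cos_of_nonneg_of_le_pi hy0.le (by linarith) h
  have step1 : logMean (Real.cos x) (Real.cos y) ≤ (Real.cos y + Real.cos x) / 2 := by
    rw [logMean_comm]
    exact logMean_le_am hcx hcc
  have step2 : (Real.cos y + Real.cos x) / 2 = Real.cos ((y + x) / 2) * Real.cos ((y - x) / 2) := by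
    rw [Real.cos_add_cos]
    ring
  have hmidpos : 0 < Real.cos ((y + x) / 2) :=
    Real.cos_pos_of_mem_Ioo ⟨by linarith, by linarith⟩
  have step3 : Real.cos ((y + x) / 2) * Real.cos ((y - x) / 2) ≤ Real.cos ((y + x) / 2) :=
    mul_le_of_le_one_right hmidpos.le (Real.cos_le_one _)
  have hLle : logMean x y ≤ (x + y) / 2 := logMean_le_am hy0 h
  have hLpos : 0 < logMean x y := logMean_pos hy0 h
  have step4 : Real.cos ((y + x) / 2) ≤ Real.cos (logMean x y) := by
    have : Real.cos ((x + y) / 2) ≤ Real.cos (logMean x y) :=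
      Real.cos_le_cos_of_nonneg_of_le_pi hLpos.le (by linarith) hLle
    rwa [show (y + x) / 2 = (x + y) / 2 by ring]
  linarith
end

section
/- For distinct x, y ∈ (0, π/2), the logarithmic mean satisfies L(1/sin x, 1/sin y) ≥ 1/sin((x+y)/2). -/
open Real

lemma logMean_ge_sqrt (a b : ℝ) (ha : 0 < a) (hb : 0 < b) (hab : a ≠ b) :
    logMean a b ≥ Real.sqrt (a * b) := by
  wlog h : b < a generalizing a b
  · rw [logMean_comm, mul_comm]
    exact this b a hb ha hab.symm (lt_of_le_of_ne (not_lt.mp h) hab)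
  have hlog : Real.log b < Real.log a := Real.log_lt_log hb h
  set u := (Real.log a - Real.log b) / 2 with hu
  set m := (Real.log a + Real.log b) / 2 with hm
  have hu0 : 0 < u := by simp only [hu]; linarith
  have ha' : a = Real.exp (m + u) := by
    rw [show m + u = Real.log a by rw [hm, hu]; ring, Real.exp_log ha]
  have hb' : b = Real.exp (m - u) := by
    rw [show m - u = Real.log b by rw [hm, hu]; ring, Real.exp_log hb]
  have hsq : Real.sqrt (a * b) = Real.exp m := by
    have : a * b = Real.exp m ^ 2 := by
      rw [ha', hb', ← Real.exp_add, sq, ← Real.exp_add]; ring_nf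
    rw [this, Real.sqrt_sq (Real.exp_pos m).le]
  have hsinh : u < Real.sinh u := Real.self_lt_sinh_iff.mpr hu0
  have hab' : a - b = Real.exp m * (2 * Real.sinh u) := by
    rw [ha', hb', Real.sinh_eq, Real.exp_add, show m - u = m + (-u) by ring, Real.exp_add]
    ring
  have hlm : logMean a b = Real.exp m * (Real.sinh u / u) := by
    unfold logMean
    rw [hab', show Real.log a - Real.log b = 2 * u by rw [hu]; ring]
    field_simp
  rw [hlm, hsq]
  have h1 : (1 : ℝ) ≤ Real.sinh u / u := (le_div_iff₀ hu0).mpr (by linarith)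
  nlinarith [Real.exp_pos m]

theorem stmt8 (x y : ℝ) (hx : x ∈ Set.Ioo 0 (π / 2)) (hy : y ∈ Set.Ioo 0 (π / 2))
    (hxy : x ≠ y) :
    logMean (1 / Real.sin x) (1 / Real.sin y) ≥ 1 / Real.sin ((x + y) / 2) := by
  obtain ⟨hx0, hx1⟩ := hx
  obtain ⟨hy0, hy1⟩ := hy
  have hpi := Real.pi_pos
  have hsx : 0 < Real.sin x := Real.sin_pos_of_pos_of_lt_pi hx0 (by linarith)
  have hsy : 0 < Real.sin y := Real.sin_pos_of_pos_of_lt_pi hy0 (by linarith)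
  set m := (x + y) / 2 with hmdef
  have hsm : 0 < Real.sin m := Real.sin_pos_of_pos_of_lt_pi (by simp [hmdef]; linarith)
    (by simp only [hmdef]; linarith)
  have hne : Real.sin x ≠ Real.sin y := by
    intro h
    exact hxy (Real.strictMonoOn_sin.injOn ⟨by linarith, by linarith⟩
      ⟨by linarith, by linarith⟩ h)
  have h1 : logMean (1 / Real.sin x) (1 / Real.sin y) ≥
      Real.sqrt ((1 / Real.sin x) * (1 / Real.sin y)) :=
    logMean_ge_sqrt _ _ (by positivity) (by positivity)
      (by intro h; apply hne; field_simp at h; linarith)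
  have hkey : Real.sin x * Real.sin y ≤ Real.sin m ^ 2 := by
    have hc : Real.cos (x - y) ≤ 1 := Real.cos_le_one _
    have e1 : Real.cos (x - y) = Real.cos x * Real.cos y + Real.sin x * Real.sin y :=
      Real.cos_sub x y
    have e2 : Real.cos (x + y) = Real.cos x * Real.cos y - Real.sin x * Real.sin y :=
      Real.cos_add x y
    have e3 : Real.cos (x + y) = Real.cos m ^ 2 - Real.sin m ^ 2 := by
      rw [show x + y = m + m by rw [hmdef]; ring, Real.cos_add]; ring
    have e4 : Real.sin m ^ 2 + Real.cos m ^ 2 = 1 := Real.sin_sq_add_cos_sq m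
    nlinarith
  have h2 : Real.sqrt ((1 / Real.sin x) * (1 / Real.sin y)) ≥ 1 / Real.sin m := by
    have hs : Real.sqrt (Real.sin x * Real.sin y) ≤ Real.sin m := by
      calc Real.sqrt (Real.sin x * Real.sin y) ≤ Real.sqrt (Real.sin m ^ 2) :=
            Real.sqrt_le_sqrt hkey
        _ = Real.sin m := Real.sqrt_sq hsm.le
    have hs0 : 0 < Real.sqrt (Real.sin x * Real.sin y) := Real.sqrt_pos.mpr (by positivity)
    rw [show (1 / Real.sin x) * (1 / Real.sin y) = 1 / (Real.sin x * Real.sin y) by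
      field_simp, Real.sqrt_div' 1 (by positivity), Real.sqrt_one]
    exact one_div_le_one_div_of_le hs0 hs
  linarith
end

section
/- For distinct x, y ∈ (0, π/2), the logarithmic mean satisfies L(1/cos x, 1/cos y) ≥ 1/cos(L(x, y)). -/
open Real

/-- sinh u ≤ u * cosh u for u ≥ 0. -/
lemma sinh_le_mul_cosh {u : ℝ} (hu : 0 ≤ u) : Real.sinh u ≤ u * Real.cosh u := by
  have key : Monotone (fun t : ℝ => t * Real.cosh t - Real.sinh t) := by
    have hd : ∀ t : ℝ, HasDerivAt (fun t : ℝ => t * Real.cosh t - Real.sinh t)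
        (t * Real.sinh t) t := by
      intro t
      have h1 := (hasDerivAt_id t).mul (Real.hasDerivAt_cosh t)
      have h2 := h1.sub (Real.hasDerivAt_sinh t)
      refine h2.congr_deriv ?_
      simp only [id_eq]
      ring
    apply monotone_of_deriv_nonneg
    · exact fun t => (hd t).differentiableAt
    · intro t
      rw [(hd t).deriv]
      rcases le_or_gt 0 t with h | h
      · exact mul_nonneg h (Real.sinh_nonneg_iff.2 h)
      · have : Real.sinh t < 0 := by simpa using Real.sinh_lt_sinh.2 h
        nlinarith
  have := key hu
  simp only [zero_mul, Real.sinh_zero, sub_zero, zero_sub] at this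
  linarith [this]

/-- logarithmic mean is at most arithmetic mean. -/
lemma logMean_le_am_s9 {x y : ℝ} (hy : 0 < y) (hxy : y < x) :
    logMean x y ≤ (x + y) / 2 := by
  have hx : 0 < x := hy.trans hxy
  have hlog : Real.log y < Real.log x := Real.log_lt_log hy hxy
  set m : ℝ := (Real.log x + Real.log y) / 2 with hm
  set u : ℝ := (Real.log x - Real.log y) / 2 with hu
  have hu0 : 0 < u := by simp [hu]; linarith
  have hxe : x = Real.exp m * Real.exp u := by
    rw [← Real.exp_add]
    have : m + u = Real.log x := by rw [hm, hu]; ring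
    rw [this, Real.exp_log hx]
  have hye : y = Real.exp m * Real.exp (-u) := by
    rw [← Real.exp_add]
    have : m + -u = Real.log y := by rw [hm, hu]; ring
    rw [this, Real.exp_log hy]
  have hsinh : Real.sinh u ≤ u * Real.cosh u := sinh_le_mul_cosh hu0.le
  rw [Real.sinh_eq, Real.cosh_eq] at hsinh
  have hem : 0 < Real.exp m := Real.exp_pos m
  rw [logMean]
  rw [div_le_div_iff₀ (by linarith) (by norm_num)]
  have hxyu : Real.log x - Real.log y = 2 * u := by rw [hu]; ring
  rw [hxyu, hxe, hye]
  nlinarith [hem]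

/-- midpoint log-convexity of sec: cos x * cos y ≤ cos ((x+y)/2)^2. -/
lemma cos_mul_cos_le {x y : ℝ} :
    Real.cos x * Real.cos y ≤ Real.cos ((x + y) / 2) ^ 2 := by
  have h1 : Real.cos ((x + y) / 2) ^ 2 = 1 / 2 + Real.cos (2 * ((x + y) / 2)) / 2 :=
    Real.cos_sq _
  have h2 : 2 * ((x + y) / 2) = x + y := by ring
  rw [h2] at h1
  have hadd := Real.cos_add x y
  have hsub := Real.cos_sub x y
  have hle := Real.cos_le_one (x - y)
  nlinarith [hadd, hsub, hle, h1]

lemma stmt9_aux (x y : ℝ) (hy0 : 0 < y) (hyx : y < x) (hx2 : x < π / 2) :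
    logMean (1 / Real.cos x) (1 / Real.cos y) ≥ 1 / Real.cos (logMean x y) := by
  have hx0 : 0 < x := hy0.trans hyx
  have hy2 : y < π / 2 := hyx.trans hx2
  have hpi : (0:ℝ) < π / 2 := by positivity
  have hcx : 0 < Real.cos x :=
    Real.cos_pos_of_mem_Ioo ⟨by linarith, hx2⟩
  have hcy : 0 < Real.cos y :=
    Real.cos_pos_of_mem_Ioo ⟨by linarith, hy2⟩
  have hcxy : Real.cos x < Real.cos y :=
    Real.cos_lt_cos_of_nonneg_of_le_pi hy0.le (by linarith [Real.pi_pos]) hyx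
  -- bounds on L := logMean x y
  set L : ℝ := logMean x y with hL
  have hlogxy : Real.log y < Real.log x := Real.log_lt_log hy0 hyx
  have hL0 : 0 < L := by
    rw [hL, logMean]
    exact div_pos (by linarith) (by linarith)
  set M : ℝ := (x + y) / 2 with hM
  have hLM : L ≤ M := logMean_le_am_s9 hy0 hyx
  have hM2 : M < π / 2 := by rw [hM]; linarith
  have hM0 : 0 < M := by rw [hM]; linarith
  have hcM : 0 < Real.cos M := Real.cos_pos_of_mem_Ioo ⟨by linarith, hM2⟩
  have hcL : Real.cos M ≤ Real.cos L := by
    rcases eq_or_lt_of_le hLM with h | h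
    · rw [h]
    · exact (Real.cos_lt_cos_of_nonneg_of_le_pi hL0.le (by linarith [Real.pi_pos]) h).le
  have hcL0 : 0 < Real.cos L := lt_of_lt_of_le hcM hcL
  -- set a, b
  set a : ℝ := Real.log (1 / Real.cos x) with ha
  set b : ℝ := Real.log (1 / Real.cos y) with hb
  have hinv : 1 / Real.cos y < 1 / Real.cos x := by
    exact one_div_lt_one_div_of_lt hcx hcxy
  have hiy : (0:ℝ) < 1 / Real.cos y := by positivity
  have hab : b < a := Real.log_lt_log hiy hinv
  have hea : Real.exp a = 1 / Real.cos x := Real.exp_log (by positivity)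
  have heb : Real.exp b = 1 / Real.cos y := Real.exp_log hiy
  have hLHS : logMean (1 / Real.cos x) (1 / Real.cos y)
      = (Real.exp a - Real.exp b) / (a - b) := by
    rw [logMean, hea, heb, ← ha, ← hb]
  -- step D: (e^a - e^b)/(a-b) ≥ e^((a+b)/2)
  set u : ℝ := (a - b) / 2 with huu
  have hu0 : 0 < u := by rw [huu]; linarith
  have hsinh : u < Real.sinh u := Real.self_lt_sinh_iff.2 hu0
  have hexp : Real.exp a - Real.exp b
      = 2 * Real.exp ((a + b) / 2) * Real.sinh u := by
    have h1 : Real.exp ((a + b) / 2) * Real.exp ((a - b) / 2) = Real.exp a := by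
      rw [← Real.exp_add]; congr 1; ring
    have h2 : Real.exp ((a + b) / 2) * Real.exp (-((a - b) / 2)) = Real.exp b := by
      rw [← Real.exp_add]; congr 1; ring
    rw [Real.sinh_eq, huu]
    linear_combination h2 - h1
  have hstepD : Real.exp ((a + b) / 2) ≤ (Real.exp a - Real.exp b) / (a - b) := by
    rw [le_div_iff₀ (by linarith), hexp]
    have he : 0 < Real.exp ((a + b) / 2) := Real.exp_pos _
    nlinarith
  -- step: e^((a+b)/2) ≥ 1 / cos M
  have hmid : Real.log (1 / Real.cos M) ≤ (a + b) / 2 := by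
    have hsq : Real.cos x * Real.cos y ≤ Real.cos M ^ 2 := by
      rw [hM]; exact cos_mul_cos_le
    have hlog2 : Real.log (Real.cos x * Real.cos y) ≤ Real.log (Real.cos M ^ 2) :=
      Real.log_le_log (by positivity) hsq
    rw [Real.log_mul hcx.ne' hcy.ne', Real.log_pow] at hlog2
    rw [ha, hb, Real.log_div one_ne_zero hcx.ne', Real.log_div one_ne_zero hcy.ne',
      Real.log_div one_ne_zero hcM.ne', Real.log_one]
    push_cast at hlog2
    linarith
  have hmid' : 1 / Real.cos M ≤ Real.exp ((a + b) / 2) := by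
    calc 1 / Real.cos M = Real.exp (Real.log (1 / Real.cos M)) :=
          (Real.exp_log (by positivity)).symm
      _ ≤ Real.exp ((a + b) / 2) := Real.exp_le_exp.2 hmid
  have hfin : 1 / Real.cos L ≤ 1 / Real.cos M :=
    one_div_le_one_div_of_le hcM hcL
  rw [ge_iff_le, hLHS]
  linarith

theorem stmt9 (x y : ℝ) (hx : x ∈ Set.Ioo 0 (π / 2)) (hy : y ∈ Set.Ioo 0 (π / 2))
    (hxy : x ≠ y) :
    logMean (1 / Real.cos x) (1 / Real.cos y) ≥ 1 / Real.cos (logMean x y) := by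
  rcases lt_or_gt_of_ne hxy with h | h
  · rw [logMean_comm (1 / Real.cos x), logMean_comm x]
    exact stmt9_aux y x hx.1 h hy.2
  · exact stmt9_aux x y hy.1 h hx.2
end

section
/- The function sin is HH-concave on (0, π/2): for all distinct x, y ∈ (0, π/2), sin(H(x,y)) ≥ H(sin x, sin y), where H(a,b) = 2ab/(a+b) is the harmonic mean. -/
open Real

lemma key1 {s : ℝ} (h0 : 0 ≤ s) (h2 : s ≤ π/2) :
    s * Real.cos (2*s) ≤ Real.sin (2*s) := by
  rcases le_or_gt (Real.cos (2*s)) 0 with hc | hc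
  · have hs : 0 ≤ Real.sin (2*s) :=
      Real.sin_nonneg_of_nonneg_of_le_pi (by linarith) (by linarith)
    nlinarith
  · rcases eq_or_lt_of_le h0 with rfl | hs0
    · simp
    have h2s : 2*s < π/2 := by
      by_contra hle
      push_neg at hle
      have : Real.cos (2*s) ≤ 0 :=
        Real.cos_nonpos_of_pi_div_two_le_of_le hle (by linarith [Real.pi_pos])
      linarith
    have ht := Real.lt_tan (by linarith : (0:ℝ) < 2*s) h2s
    rw [Real.tan_eq_sin_div_cos, lt_div_iff₀ hc] at ht
    nlinarith

noncomputable def Gfun (s : ℝ) : ℝ := s * (1 + Real.cos s ^ 2) - Real.sin (2*s)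
noncomputable def G1fun (s : ℝ) : ℝ :=
  1 + Real.cos s ^ 2 - s * Real.sin (2*s) - 2 * Real.cos (2*s)

lemma hasDerivAt_G1 (s : ℝ) :
    HasDerivAt G1fun (2 * Real.sin (2*s) - 2 * (s * Real.cos (2*s))) s := by
  have hc2 : HasDerivAt (fun s : ℝ => Real.cos s ^ 2) (2 * Real.cos s ^ 1 * (-Real.sin s)) s :=
    (Real.hasDerivAt_cos s).pow 2
  have h2s : HasDerivAt (fun s : ℝ => 2*s) 2 s := by
    simpa using (hasDerivAt_id s).const_mul 2
  have hs2 : HasDerivAt (fun s : ℝ => Real.sin (2*s)) (Real.cos (2*s) * 2) s :=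
    (Real.hasDerivAt_sin (2*s)).comp s h2s
  have hc2s : HasDerivAt (fun s : ℝ => Real.cos (2*s)) (-Real.sin (2*s) * 2) s :=
    (Real.hasDerivAt_cos (2*s)).comp s h2s
  have hss : HasDerivAt (fun s : ℝ => s * Real.sin (2*s))
      (1 * Real.sin (2*s) + s * (Real.cos (2*s) * 2)) s :=
    (hasDerivAt_id s).mul hs2
  have := (((hasDerivAt_const s (1:ℝ)).add hc2).sub hss).sub (hc2s.const_mul 2)
  refine this.congr_deriv ?_
  have := Real.sin_two_mul s
  nlinarith [Real.sin_two_mul s]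

lemma hasDerivAt_G (s : ℝ) : HasDerivAt Gfun (G1fun s) s := by
  have hc2 : HasDerivAt (fun s : ℝ => Real.cos s ^ 2) (2 * Real.cos s ^ 1 * (-Real.sin s)) s :=
    (Real.hasDerivAt_cos s).pow 2
  have h2s : HasDerivAt (fun s : ℝ => 2*s) 2 s := by
    simpa using (hasDerivAt_id s).const_mul 2
  have hs2 : HasDerivAt (fun s : ℝ => Real.sin (2*s)) (Real.cos (2*s) * 2) s :=
    (Real.hasDerivAt_sin (2*s)).comp s h2s
  have hmul : HasDerivAt (fun s : ℝ => s * (1 + Real.cos s ^ 2))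
      (1 * (1 + Real.cos s ^ 2) + s * (0 + 2 * Real.cos s ^ 1 * (-Real.sin s))) s :=
    (hasDerivAt_id s).mul ((hasDerivAt_const s (1:ℝ)).add hc2)
  have := hmul.sub hs2
  refine this.congr_deriv ?_
  unfold G1fun
  linear_combination s * Real.sin_two_mul s

lemma keyG {s : ℝ} (h0 : 0 ≤ s) (h2 : s ≤ π/2) :
    Real.sin (2*s) ≤ s * (1 + Real.cos s ^ 2) := by
  have hpi := Real.pi_pos
  -- G1 is monotone on Icc 0 (π/2)
  have hG1mono : MonotoneOn G1fun (Set.Icc 0 (π/2)) := by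
    apply monotoneOn_of_deriv_nonneg (convex_Icc _ _)
    · exact fun t _ => ((hasDerivAt_G1 t).continuousAt).continuousWithinAt
    · exact fun t _ => ((hasDerivAt_G1 t).differentiableAt).differentiableWithinAt
    · intro t ht
      rw [interior_Icc] at ht
      rw [(hasDerivAt_G1 t).deriv]
      have := key1 (le_of_lt ht.1) (le_of_lt ht.2)
      linarith
  have hG1nonneg : ∀ t ∈ Set.Icc (0:ℝ) (π/2), 0 ≤ G1fun t := by
    intro t ht
    have h0' : G1fun 0 = 0 := by simp [G1fun]; norm_num
    have := hG1mono (Set.left_mem_Icc.2 (by linarith)) ht ht.1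
    linarith
  have hGmono : MonotoneOn Gfun (Set.Icc 0 (π/2)) := by
    apply monotoneOn_of_deriv_nonneg (convex_Icc _ _)
    · exact fun t _ => ((hasDerivAt_G t).continuousAt).continuousWithinAt
    · exact fun t _ => ((hasDerivAt_G t).differentiableAt).differentiableWithinAt
    · intro t ht
      rw [interior_Icc] at ht
      rw [(hasDerivAt_G t).deriv]
      exact hG1nonneg t (Set.mem_Icc.2 ⟨le_of_lt ht.1, le_of_lt ht.2⟩)
  have h00 : Gfun 0 = 0 := by simp [Gfun]
  have := hGmono (Set.left_mem_Icc.2 (by linarith)) (Set.mem_Icc.2 ⟨h0, h2⟩) h0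
  unfold Gfun at *
  linarith

noncomputable def phi (u : ℝ) : ℝ := (Real.sin u⁻¹)⁻¹
noncomputable def d1 (u : ℝ) : ℝ := Real.cos u⁻¹ / (u^2 * Real.sin u⁻¹ ^ 2)

lemma mem_facts {u : ℝ} (hu : u ∈ Set.Ioi (2/π)) :
    0 < u ∧ 0 < u⁻¹ ∧ u⁻¹ < π/2 ∧ 0 < Real.sin u⁻¹ := by
  have hpi := Real.pi_pos
  have h2pi : 0 < 2/π := by positivity
  have hu0 : 0 < u := lt_trans h2pi hu
  have hinv0 : 0 < u⁻¹ := by positivity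
  have hlt : u⁻¹ < π/2 := by
    have : (π/2)⁻¹ < u := by rwa [inv_div]
    calc u⁻¹ < ((π/2)⁻¹)⁻¹ := by
          exact inv_strictAnti₀ (by positivity) this
      _ = π/2 := inv_inv _
  exact ⟨hu0, hinv0, hlt, Real.sin_pos_of_pos_of_lt_pi hinv0 (by linarith)⟩

lemma hasDerivAt_phi {u : ℝ} (hu : u ∈ Set.Ioi (2/π)) : HasDerivAt phi (d1 u) u := by
  obtain ⟨hu0, hi0, hlt, hs⟩ := mem_facts hu
  have hinv : HasDerivAt (fun u : ℝ => u⁻¹) (-(u^2)⁻¹) u := hasDerivAt_inv hu0.ne'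
  have hsin : HasDerivAt (fun u : ℝ => Real.sin u⁻¹) (Real.cos u⁻¹ * -(u^2)⁻¹) u :=
    (Real.hasDerivAt_sin u⁻¹).comp u hinv
  have h := hsin.inv hs.ne'
  refine h.congr_deriv ?_
  unfold d1
  field_simp

lemma hasDerivAt_d1 {u : ℝ} (hu : u ∈ Set.Ioi (2/π)) :
    HasDerivAt d1
      (((-Real.sin u⁻¹ * -(u^2)⁻¹) * (u^2 * Real.sin u⁻¹ ^ 2) -
        Real.cos u⁻¹ * (2*u * Real.sin u⁻¹ ^ 2 +
          u^2 * (2 * Real.sin u⁻¹ ^ 1 * (Real.cos u⁻¹ * -(u^2)⁻¹)))) /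
        (u^2 * Real.sin u⁻¹ ^ 2)^2) u := by
  obtain ⟨hu0, hi0, hlt, hs⟩ := mem_facts hu
  have hinv : HasDerivAt (fun u : ℝ => u⁻¹) (-(u^2)⁻¹) u := hasDerivAt_inv hu0.ne'
  have hsin : HasDerivAt (fun u : ℝ => Real.sin u⁻¹) (Real.cos u⁻¹ * -(u^2)⁻¹) u :=
    (Real.hasDerivAt_sin u⁻¹).comp u hinv
  have hcos : HasDerivAt (fun u : ℝ => Real.cos u⁻¹) (-Real.sin u⁻¹ * -(u^2)⁻¹) u :=
    (Real.hasDerivAt_cos u⁻¹).comp u hinv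
  have hsq : HasDerivAt (fun u : ℝ => u^2) (2*u) u := by
    simpa using hasDerivAt_pow 2 u
  have hs2 : HasDerivAt (fun u : ℝ => Real.sin u⁻¹ ^ 2)
      (2 * Real.sin u⁻¹ ^ 1 * (Real.cos u⁻¹ * -(u^2)⁻¹)) u := hsin.pow 2
  have hD : HasDerivAt (fun u : ℝ => u^2 * Real.sin u⁻¹ ^ 2)
      (2*u * Real.sin u⁻¹ ^ 2 + u^2 * (2 * Real.sin u⁻¹ ^ 1 * (Real.cos u⁻¹ * -(u^2)⁻¹))) u :=
    hsq.mul hs2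
  have hDne : u^2 * Real.sin u⁻¹ ^ 2 ≠ 0 := by positivity
  exact hcos.div hD hDne

lemma d2_nonneg {u : ℝ} (hu : u ∈ Set.Ioi (2/π)) :
    0 ≤ ((-Real.sin u⁻¹ * -(u^2)⁻¹) * (u^2 * Real.sin u⁻¹ ^ 2) -
        Real.cos u⁻¹ * (2*u * Real.sin u⁻¹ ^ 2 +
          u^2 * (2 * Real.sin u⁻¹ ^ 1 * (Real.cos u⁻¹ * -(u^2)⁻¹)))) /
        (u^2 * Real.sin u⁻¹ ^ 2)^2 := by
  obtain ⟨hu0, hi0, hlt, hs⟩ := mem_facts hu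
  apply div_nonneg _ (by positivity)
  have hnum : (-Real.sin u⁻¹ * -(u^2)⁻¹) * (u^2 * Real.sin u⁻¹ ^ 2) -
        Real.cos u⁻¹ * (2*u * Real.sin u⁻¹ ^ 2 +
          u^2 * (2 * Real.sin u⁻¹ ^ 1 * (Real.cos u⁻¹ * -(u^2)⁻¹)))
      = Real.sin u⁻¹ * ((Real.sin u⁻¹^2 + 2*Real.cos u⁻¹^2)
          - 2*u*Real.sin u⁻¹*Real.cos u⁻¹) := by
    field_simp
    ring
  rw [hnum]
  apply mul_nonneg hs.le
  have hk := keyG hi0.le hlt.le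
  have h1 : u * Real.sin (2*u⁻¹) ≤ u * (u⁻¹ * (1 + Real.cos u⁻¹ ^ 2)) :=
    mul_le_mul_of_nonneg_left hk hu0.le
  rw [Real.sin_two_mul] at h1
  have h2 : u * u⁻¹ = 1 := mul_inv_cancel₀ hu0.ne'
  have hpy := Real.sin_sq_add_cos_sq u⁻¹
  nlinarith

lemma phi_convex : ConvexOn ℝ (Set.Ioi (2/π)) phi := by
  have hint : interior (Set.Ioi (2/π)) = Set.Ioi (2/π) := interior_Ioi
  apply convexOn_of_deriv2_nonneg (convex_Ioi _)
  · intro u hu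
    exact (hasDerivAt_phi hu).continuousAt.continuousWithinAt
  · rw [hint]
    intro u hu
    exact (hasDerivAt_phi hu).differentiableAt.differentiableWithinAt
  · rw [hint]
    apply DifferentiableOn.congr
      (f := d1)
      (fun u hu => (hasDerivAt_d1 hu).differentiableAt.differentiableWithinAt)
    intro u hu
    exact (hasDerivAt_phi hu).deriv
  · rw [hint]
    intro u hu
    have heq : deriv (deriv phi) u = deriv d1 u := by
      apply Filter.EventuallyEq.deriv_eq
      filter_upwards [isOpen_Ioi.mem_nhds hu] with v hv
      exact (hasDerivAt_phi hv).deriv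
    have h2 : deriv^[2] phi u = deriv (deriv phi) u := rfl
    rw [h2, heq, (hasDerivAt_d1 hu).deriv]
    exact d2_nonneg hu

theorem stmt17 (x y : ℝ) (hx : x ∈ Set.Ioo 0 (π / 2)) (hy : y ∈ Set.Ioo 0 (π / 2))
    (hxy : x ≠ y) :
    Real.sin (2 * x * y / (x + y)) ≥
      2 * (Real.sin x * Real.sin y) / (Real.sin x + Real.sin y) := by
  have hpi := Real.pi_pos
  obtain ⟨hx0, hx2⟩ := hx
  obtain ⟨hy0, hy2⟩ := hy
  have hux : x⁻¹ ∈ Set.Ioi (2/π) := by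
    have h := inv_strictAnti₀ hx0 hx2
    rw [inv_div] at h
    exact h
  have huy : y⁻¹ ∈ Set.Ioi (2/π) := by
    have h := inv_strictAnti₀ hy0 hy2
    rw [inv_div] at h
    exact h
  have hconv := phi_convex.2 hux huy (by norm_num : (0:ℝ) ≤ 1/2)
    (by norm_num : (0:ℝ) ≤ 1/2) (by norm_num)
  simp only [smul_eq_mul] at hconv
  set h := 2 * x * y / (x + y) with hdef
  have hsum : 0 < x + y := by linarith
  have hh0 : 0 < h := by positivity
  have hm : (1/2) * x⁻¹ + (1/2) * y⁻¹ = h⁻¹ := by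
    rw [hdef]
    field_simp
    ring
  rw [hm] at hconv
  have hphih : phi h⁻¹ = (Real.sin h)⁻¹ := by rw [phi, inv_inv]
  have hphix : phi x⁻¹ = (Real.sin x)⁻¹ := by rw [phi, inv_inv]
  have hphiy : phi y⁻¹ = (Real.sin y)⁻¹ := by rw [phi, inv_inv]
  rw [hphih, hphix, hphiy] at hconv
  -- positivity of sines
  have hsx : 0 < Real.sin x := Real.sin_pos_of_pos_of_lt_pi hx0 (by linarith)
  have hsy : 0 < Real.sin y := Real.sin_pos_of_pos_of_lt_pi hy0 (by linarith)
  have hhin : 2/π < h⁻¹ := by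
    rw [← hm]
    have h1 : 2/π < x⁻¹ := hux
    have h2 : 2/π < y⁻¹ := huy
    linarith
  have hhlt : h < π/2 := by
    have := inv_strictAnti₀ (by positivity : (0:ℝ) < 2/π) hhin
    rwa [inv_inv, inv_div] at this
  have hsh : 0 < Real.sin h := Real.sin_pos_of_pos_of_lt_pi hh0 (by linarith)
  rw [ge_iff_le]
  have hBeq : 2 * (Real.sin x * Real.sin y) / (Real.sin x + Real.sin y)
      = ((1/2) * (Real.sin x)⁻¹ + (1/2) * (Real.sin y)⁻¹)⁻¹ := by
    rw [inv_eq_one_div]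
    field_simp
    ring
  rw [hBeq]
  exact inv_le_of_inv_le₀ hsh hconv
end

section
/- Let f : I → (0,∞) be differentiable on an open subinterval I of (0,∞). Then f is HH-convex on I if and only if x ↦ x² f'(x)/f(x)² is increasing on I. -/
open Filter Topology Set

lemma slope_left_aux (g : ℝ → ℝ) {x y : ℝ} (hxy : x < y)
    (hmid : g ((x + y) / 2) ≤ (g x + g y) / 2) :
    slope g x ((x + y) / 2) ≤ slope g x y := by
  rw [slope_def_field, slope_def_field, div_le_div_iff₀ (by linarith) (by linarith)]
  nlinarith [mul_nonneg (sub_nonneg.2 hmid) (sub_nonneg.2 hxy.le)]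

lemma slope_right_aux (g : ℝ → ℝ) {x y : ℝ} (hxy : x < y)
    (hmid : g ((x + y) / 2) ≤ (g x + g y) / 2) :
    slope g x y ≤ slope g ((x + y) / 2) y := by
  rw [slope_def_field, slope_def_field, div_le_div_iff₀ (by linarith) (by linarith)]
  nlinarith [mul_nonneg (sub_nonneg.2 hmid) (sub_nonneg.2 hxy.le)]

lemma mono_deriv_of_mid (J : Set ℝ) (hJ : Convex ℝ J) (g : ℝ → ℝ)
    (hg : ∀ u ∈ J, DifferentiableAt ℝ g u)
    (hmid : ∀ u ∈ J, ∀ v ∈ J, g ((u + v) / 2) ≤ (g u + g v) / 2) :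
    MonotoneOn (deriv g) J := by
  have key1 : ∀ u ∈ J, ∀ v ∈ J, u < v → deriv g u ≤ slope g u v := by
    intro u hu v hv huv
    set t : ℕ → ℝ := fun n => u + (v - u) * (2⁻¹ : ℝ) ^ n with ht
    have hvu : 0 < v - u := sub_pos.2 huv
    have htpos : ∀ n, u < t n := fun n => by
      have := pow_pos (by norm_num : (0:ℝ) < 2⁻¹) n
      simp only [ht]; nlinarith
    have htle : ∀ n, t n ≤ v := fun n => by
      have h1 : (2⁻¹ : ℝ) ^ n ≤ 1 := pow_le_one₀ (by norm_num) (by norm_num)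
      simp only [ht]; nlinarith
    have htJ : ∀ n, t n ∈ J := fun n => hJ.ordConnected.out hu hv ⟨(htpos n).le, htle n⟩
    have hbound : ∀ n, slope g u (t n) ≤ slope g u v := by
      intro n
      induction n with
      | zero => simp [ht]
      | succ n ih =>
        have h2 : t (n + 1) = (u + t n) / 2 := by simp only [ht]; ring
        calc slope g u (t (n + 1)) = slope g u ((u + t n) / 2) := by rw [h2]
          _ ≤ slope g u (t n) := slope_left_aux g (htpos n) (hmid u hu (t n) (htJ n))
          _ ≤ slope g u v := ih
    have hlim : Tendsto (fun n => slope g u (t n)) atTop (𝓝 (deriv g u)) := by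
      have hd := (hg u hu).hasDerivAt
      rw [hasDerivAt_iff_tendsto_slope] at hd
      apply hd.comp
      apply tendsto_nhdsWithin_of_tendsto_nhds_of_eventually_within
      · have h0 : Tendsto (fun n : ℕ => (2⁻¹ : ℝ) ^ n) atTop (𝓝 0) :=
          tendsto_pow_atTop_nhds_zero_of_lt_one (by norm_num) (by norm_num)
        have h1 : Tendsto t atTop (𝓝 (u + (v - u) * 0)) :=
          tendsto_const_nhds.add (tendsto_const_nhds.mul h0)
        have he : u + (v - u) * 0 = u := by ring
        rw [he] at h1; exact h1
      · exact Eventually.of_forall fun n => (htpos n).ne'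
    exact le_of_tendsto hlim (Eventually.of_forall hbound)
  have key2 : ∀ u ∈ J, ∀ v ∈ J, u < v → slope g u v ≤ deriv g v := by
    intro u hu v hv huv
    set s : ℕ → ℝ := fun n => v - (v - u) * (2⁻¹ : ℝ) ^ n with hs
    have hvu : 0 < v - u := sub_pos.2 huv
    have hspos : ∀ n, s n < v := fun n => by
      have := pow_pos (by norm_num : (0:ℝ) < 2⁻¹) n
      simp only [hs]; nlinarith
    have hsge : ∀ n, u ≤ s n := fun n => by
      have h1 : (2⁻¹ : ℝ) ^ n ≤ 1 := pow_le_one₀ (by norm_num) (by norm_num)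
      simp only [hs]; nlinarith
    have hsJ : ∀ n, s n ∈ J := fun n => hJ.ordConnected.out hu hv ⟨hsge n, (hspos n).le⟩
    have hbound : ∀ n, slope g u v ≤ slope g v (s n) := by
      intro n
      induction n with
      | zero => simp [hs, slope_comm]
      | succ n ih =>
        have h2 : s (n + 1) = (s n + v) / 2 := by simp only [hs]; ring
        calc slope g u v ≤ slope g v (s n) := ih
          _ = slope g (s n) v := slope_comm g v (s n)
          _ ≤ slope g ((s n + v) / 2) v := slope_right_aux g (hspos n) (hmid (s n) (hsJ n) v hv)
          _ = slope g v (s (n + 1)) := by rw [h2, slope_comm]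
    have hlim : Tendsto (fun n => slope g v (s n)) atTop (𝓝 (deriv g v)) := by
      have hd := (hg v hv).hasDerivAt
      rw [hasDerivAt_iff_tendsto_slope] at hd
      apply hd.comp
      apply tendsto_nhdsWithin_of_tendsto_nhds_of_eventually_within
      · have h0 : Tendsto (fun n : ℕ => (2⁻¹ : ℝ) ^ n) atTop (𝓝 0) :=
          tendsto_pow_atTop_nhds_zero_of_lt_one (by norm_num) (by norm_num)
        have h1 : Tendsto s atTop (𝓝 (v - (v - u) * 0)) :=
          tendsto_const_nhds.sub (tendsto_const_nhds.mul h0)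
        have he : v - (v - u) * 0 = v := by ring
        rw [he] at h1; exact h1
      · exact Eventually.of_forall fun n => (hspos n).ne
    exact ge_of_tendsto hlim (Eventually.of_forall hbound)
  intro u hu v hv huv
  rcases huv.eq_or_lt with rfl | h
  · exact le_rfl
  · exact (key1 u hu v hv h).trans (key2 u hu v hv h)
lemma hh_inv {p q F : ℝ} (hp : 0 < p) (hq : 0 < q) (hF : 0 < F)
    (h : F ≤ 2 * (p * q) / (p + q)) : -F⁻¹ ≤ (-p⁻¹ + -q⁻¹) / 2 := by
  have h1 : F * (p + q) ≤ 2 * (p * q) := (le_div_iff₀ (by positivity)).1 h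
  have key : (p⁻¹ + q⁻¹) / 2 ≤ F⁻¹ := by
    have e : (p⁻¹ + q⁻¹) / 2 = (p + q) / (2 * (p * q)) := by field_simp; ring
    rw [e, inv_eq_one_div, div_le_div_iff₀ (by positivity) hF]
    nlinarith
  have e2 : (-p⁻¹ + -q⁻¹) / 2 = -((p⁻¹ + q⁻¹) / 2) := by ring
  rw [e2]
  exact neg_le_neg key

lemma hh_inv' {p q F : ℝ} (hp : 0 < p) (hq : 0 < q) (hF : 0 < F)
    (h : -F⁻¹ ≤ 1/2 * -p⁻¹ + 1/2 * -q⁻¹) : F ≤ 2 * (p * q) / (p + q) := by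
  have key : (p⁻¹ + q⁻¹) / 2 ≤ F⁻¹ := by linarith
  have e : (p⁻¹ + q⁻¹) / 2 = (p + q) / (2 * (p * q)) := by field_simp; ring
  rw [e, inv_eq_one_div, div_le_div_iff₀ (by positivity) hF] at key
  rw [le_div_iff₀ (by positivity)]
  nlinarith

open Filter Topology Set in
theorem stmt18 (a b : ℝ) (ha : 0 ≤ a) (f : ℝ → ℝ)
    (hdiff : ∀ x ∈ Set.Ioo a b, DifferentiableAt ℝ f x)
    (hpos : ∀ x ∈ Set.Ioo a b, 0 < f x) :
    (∀ x ∈ Set.Ioo a b, ∀ y ∈ Set.Ioo a b,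
        f (2 * x * y / (x + y)) ≤ 2 * (f x * f y) / (f x + f y)) ↔
      MonotoneOn (fun x => x ^ 2 * deriv f x / f x ^ 2) (Set.Ioo a b) := by
  by_cases hab : a < b
  swap
  · rw [Set.Ioo_eq_empty hab]
    constructor
    · intro _ x hx; exact absurd hx (Set.notMem_empty x)
    · intro _ x hx; exact absurd hx (Set.notMem_empty x)
  have hb : 0 < b := lt_of_le_of_lt ha hab
  -- positivity on I
  have hxpos : ∀ x ∈ Set.Ioo a b, 0 < x := fun x hx => lt_of_le_of_lt ha hx.1
  set J : Set ℝ := Set.Ioi b⁻¹ ∩ {u | a * u < 1} with hJdef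
  have hJmem : ∀ u, u ∈ J ↔ 0 < u ∧ u⁻¹ ∈ Set.Ioo a b := by
    intro u
    constructor
    · rintro ⟨h1, h2⟩
      have hu : 0 < u := lt_trans (inv_pos.2 hb) h1
      refine ⟨hu, ?_, ?_⟩
      · have hiu : u⁻¹ * u = 1 := inv_mul_cancel₀ hu.ne'
        have : a * u < u⁻¹ * u := by rw [hiu]; exact h2
        exact lt_of_mul_lt_mul_right this hu.le
      · have := (inv_lt_inv₀ hu (inv_pos.2 hb)).2 h1
        rwa [inv_inv] at this
    · rintro ⟨hu, h1, h2⟩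
      constructor
      · have := (inv_lt_inv₀ hb (inv_pos.2 hu)).2 h2
        rwa [inv_inv] at this
      · show a * u < 1
        have hiu : u⁻¹ * u = 1 := inv_mul_cancel₀ hu.ne'
        calc a * u < u⁻¹ * u := by exact mul_lt_mul_of_pos_right h1 hu
          _ = 1 := hiu
  have hImem : ∀ x ∈ Set.Ioo a b, x⁻¹ ∈ J := by
    intro x hx
    rw [hJmem]
    exact ⟨inv_pos.2 (hxpos x hx), by rwa [inv_inv]⟩
  have hJconv : Convex ℝ J :=
    (convex_Ioi _).inter (convex_halfSpace_lt (IsLinearMap.isLinearMap_smul a) 1)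
  have hJopen : IsOpen J :=
    isOpen_Ioi.inter (isOpen_lt (continuous_const.mul continuous_id) continuous_const)
  set g : ℝ → ℝ := fun u => -(f u⁻¹)⁻¹ with hgdef
  have hderiv : ∀ u ∈ J, HasDerivAt g (-((u⁻¹) ^ 2 * deriv f u⁻¹ / f u⁻¹ ^ 2)) u := by
    intro u hu
    obtain ⟨hu0, hxI⟩ := (hJmem u).1 hu
    have hfx : f u⁻¹ ≠ 0 := (hpos _ hxI).ne'
    have h1 : HasDerivAt (fun w : ℝ => w⁻¹) (-(u ^ 2)⁻¹) u := hasDerivAt_inv hu0.ne'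
    have h2 : HasDerivAt f (deriv f u⁻¹) u⁻¹ := (hdiff _ hxI).hasDerivAt
    have h3 : HasDerivAt (fun w : ℝ => f w⁻¹) (deriv f u⁻¹ * -(u ^ 2)⁻¹) u := h2.comp u h1
    have h4 := (h3.inv hfx).neg
    refine h4.congr_deriv ?_
    ring
  have hgd : ∀ u ∈ J, DifferentiableAt ℝ g u := fun u hu => (hderiv u hu).differentiableAt
  have hderiv_eq : ∀ u ∈ J, deriv g u = -((u⁻¹) ^ 2 * deriv f u⁻¹ / f u⁻¹ ^ 2) :=
    fun u hu => (hderiv u hu).deriv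
  -- harmonic mean identity
  have hHM : ∀ x ∈ Set.Ioo a b, ∀ y ∈ Set.Ioo a b,
      ((x⁻¹ + y⁻¹) / 2)⁻¹ = 2 * x * y / (x + y) := by
    intro x hx y hy
    have hx0 := (hxpos x hx).ne'
    have hy0 := (hxpos y hy).ne'
    have hxy0 : x + y ≠ 0 := ne_of_gt (add_pos (hxpos x hx) (hxpos y hy))
    rw [show (x⁻¹ + y⁻¹) / 2 = (x + y) / (2 * (x * y)) by field_simp; ring, inv_div]
    ring
  constructor
  · -- HH convex ⟹ monotone
    intro hHH
    have hmid : ∀ u ∈ J, ∀ v ∈ J, g ((u + v) / 2) ≤ (g u + g v) / 2 := by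
      intro u hu v hv
      obtain ⟨hu0, hxI⟩ := (hJmem u).1 hu
      obtain ⟨hv0, hyI⟩ := (hJmem v).1 hv
      have hmJ : (u + v) / 2 ∈ J := by
        have hm := hJconv hu hv (by norm_num : (0:ℝ) ≤ 1/2) (by norm_num : (0:ℝ) ≤ 1/2) (by norm_num)
        rwa [smul_eq_mul, smul_eq_mul,
          show (1/2:ℝ) * u + 1/2 * v = (u + v) / 2 from by ring] at hm
      obtain ⟨hm0, hmI⟩ := (hJmem _).1 hmJ
      have hid : ((u + v) / 2)⁻¹ = 2 * u⁻¹ * v⁻¹ / (u⁻¹ + v⁻¹) := by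
        have h := hHM u⁻¹ hxI v⁻¹ hyI
        rwa [inv_inv, inv_inv] at h
      have hkey := hHH u⁻¹ hxI v⁻¹ hyI
      rw [← hid] at hkey
      have hF : 0 < f (((u + v) / 2)⁻¹) := hpos _ hmI
      have hp : 0 < f u⁻¹ := hpos _ hxI
      have hq : 0 < f v⁻¹ := hpos _ hyI
      show -(f (((u + v) / 2)⁻¹))⁻¹ ≤ (-(f u⁻¹)⁻¹ + -(f v⁻¹)⁻¹) / 2
      exact hh_inv hp hq hF hkey
    have hmono := mono_deriv_of_mid J hJconv g hgd hmid
    intro x hx y hy hxy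
    have hux : x⁻¹ ∈ J := hImem x hx
    have huy : y⁻¹ ∈ J := hImem y hy
    have hle : y⁻¹ ≤ x⁻¹ := by
      apply inv_anti₀ (hxpos x hx) hxy
    have := hmono huy hux hle
    rw [hderiv_eq _ huy, hderiv_eq _ hux, inv_inv, inv_inv] at this
    simpa using neg_le_neg_iff.1 this
  · -- monotone ⟹ HH convex
    intro hmono
    have hderivmono : MonotoneOn (deriv g) J := by
      intro u hu v hv huv
      obtain ⟨hu0, hxI⟩ := (hJmem u).1 hu
      obtain ⟨hv0, hyI⟩ := (hJmem v).1 hv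
      rw [hderiv_eq _ hu, hderiv_eq _ hv]
      have hle : v⁻¹ ≤ u⁻¹ := inv_anti₀ hu0 huv
      exact neg_le_neg (hmono hyI hxI hle)
    have hconv : ConvexOn ℝ J g := by
      apply MonotoneOn.convexOn_of_deriv hJconv
      · exact fun u hu => (hgd u hu).continuousAt.continuousWithinAt
      · rw [hJopen.interior_eq]
        exact fun u hu => (hgd u hu).differentiableWithinAt
      · rwa [hJopen.interior_eq]
    intro x hx y hy
    have hux : x⁻¹ ∈ J := hImem x hx
    have huy : y⁻¹ ∈ J := hImem y hy
    have hmid := hconv.2 hux huy (by norm_num : (0:ℝ) ≤ 1/2) (by norm_num : (0:ℝ) ≤ 1/2) (by norm_num)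
    simp only [smul_eq_mul] at hmid
    have heq : (1:ℝ)/2 * x⁻¹ + 1/2 * y⁻¹ = (x⁻¹ + y⁻¹) / 2 := by ring
    rw [heq] at hmid
    have hmJ : (x⁻¹ + y⁻¹) / 2 ∈ J := by
      have hm := hJconv hux huy (by norm_num : (0:ℝ) ≤ 1/2) (by norm_num : (0:ℝ) ≤ 1/2) (by norm_num)
      rwa [smul_eq_mul, smul_eq_mul,
        show (1/2:ℝ) * x⁻¹ + 1/2 * y⁻¹ = (x⁻¹ + y⁻¹) / 2 from by ring] at hm
    obtain ⟨hm0, hmI⟩ := (hJmem _).1 hmJ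
    rw [hHM x hx y hy] at hmI
    have hF : 0 < f (2 * x * y / (x + y)) := hpos _ hmI
    have hp : 0 < f x := hpos x hx
    have hq : 0 < f y := hpos y hy
    -- unfold g in hmid
    have hg1 : g ((x⁻¹ + y⁻¹) / 2) = -(f (2 * x * y / (x + y)))⁻¹ := by
      simp only [hgdef]; rw [hHM x hx y hy]
    have hg2 : g x⁻¹ = -(f x)⁻¹ := by simp only [hgdef]; rw [inv_inv]
    have hg3 : g y⁻¹ = -(f y)⁻¹ := by simp only [hgdef]; rw [inv_inv]
    rw [hg1, hg2, hg3] at hmid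
    exact hh_inv' hp hq hF hmid
end
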